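/- Let n > 4 and let F be an (n,m)-function with F(0) = 0 such that max over μ ∈ 𝔽₂^m∖{0} and ν ∈ 𝔽₂ⁿ of |W_F(μ,ν)| equals 2^{(n+λ)/2}, where λ is an integer with 0 ≤ λ ≤ n−4 and λ ≡ n (mod 2). Then the binary linear code C_F is minimal, has length 2ⁿ−1 and dimension n+m over 𝔽₂, and every nonzero codeword of C_F has Hamming weight at least 2^{n−1} − 2^{(n+λ)/2−1}. -/

import Mathlib

def dotp {n : ℕ} (v x : Fin n → ZMod 2) : ZMod 2 := ∑ i, v i * x i

def wht {n : ℕ} (f : (Fin n → ZMod 2) → ZMod 2) (ν : Fin n → ZMod 2) : ℤ :=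
  ∑ x : Fin n → ZMod 2, (-1 : ℤ) ^ (f x + dotp ν x).val

def whtF {n m : ℕ} (F : (Fin n → ZMod 2) → (Fin m → ZMod 2))
    (μ : Fin m → ZMod 2) (ν : Fin n → ZMod 2) : ℤ :=
  wht (fun x => dotp μ (F x)) ν

def cw {n m : ℕ} (F : (Fin n → ZMod 2) → (Fin m → ZMod 2))
    (μ : Fin m → ZMod 2) (ν : Fin n → ZMod 2) :
    {x : Fin n → ZMod 2 // x ≠ 0} → ZMod 2 :=
  fun x => dotp μ (F x.1) + dotp ν x.1

def codeF {n m : ℕ} (F : (Fin n → ZMod 2) → (Fin m → ZMod 2)) :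
    Set ({x : Fin n → ZMod 2 // x ≠ 0} → ZMod 2) :=
  Set.range fun p : (Fin m → ZMod 2) × (Fin n → ZMod 2) => cw F p.1 p.2

def wt {n : ℕ} (c : {x : Fin n → ZMod 2 // x ≠ 0} → ZMod 2) : ℕ :=
  (Finset.univ.filter fun x => c x = 1).card

def IsMinimal {n : ℕ} (C : Set ({x : Fin n → ZMod 2 // x ≠ 0} → ZMod 2)) : Prop :=
  ∀ c ∈ C, ∀ c' ∈ C, c ≠ 0 → c' ≠ 0 →
    {x | c' x = 1} ⊆ {x | c x = 1} → c' = c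

def weights {n m : ℕ} (F : (Fin n → ZMod 2) → (Fin m → ZMod 2)) : Set ℕ :=
  {w | ∃ c ∈ codeF F, c ≠ 0 ∧ wt c = w}

lemma zmod2_ne_zero : ∀ a : ZMod 2, a ≠ 0 → a = 1 := by decide
lemma dotp_add_left {n : ℕ} (u v x : Fin n → ZMod 2) :
    dotp (u + v) x = dotp u x + dotp v x := by
  simp [dotp, add_mul, Finset.sum_add_distrib]
lemma dotp_zero_left {n : ℕ} (x : Fin n → ZMod 2) : dotp (0 : Fin n → ZMod 2) x = 0 := by
  simp [dotp]
lemma dotp_zero_right {n : ℕ} (v : Fin n → ZMod 2) : dotp v 0 = 0 := by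
  simp [dotp]
lemma dotp_single {n : ℕ} (v : Fin n → ZMod 2) (i : Fin n) :
    dotp v (Pi.single i 1) = v i := by
  simp [dotp, Pi.single_apply]
lemma dotp_update {n : ℕ} (v x : Fin n → ZMod 2) (i : Fin n) :
    dotp v (Function.update x i (x i + 1)) = dotp v x + v i := by
  unfold dotp
  rw [← Finset.sum_erase_add _ _ (Finset.mem_univ i),
    ← Finset.sum_erase_add (Finset.univ) (fun j => v j * x j) (Finset.mem_univ i)]
  have h1 : ∑ j ∈ Finset.univ.erase i, v j * Function.update x i (x i + 1) j
      = ∑ j ∈ Finset.univ.erase i, v j * x j :=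
    Finset.sum_congr rfl fun j hj => by
      rw [Function.update_of_ne (Finset.ne_of_mem_erase hj)]
  rw [h1, Function.update_self]
  ring
lemma card_fun2 {n : ℕ} : Fintype.card (Fin n → ZMod 2) = 2 ^ n := by
  simp
lemma wht_eq_card {n : ℕ} (f : (Fin n → ZMod 2) → ZMod 2) (ν : Fin n → ZMod 2) :
    wht f ν = 2 ^ n - 2 * ((Finset.univ.filter fun x => f x + dotp ν x = 1).card : ℤ) := by
  have h : ∀ a : ZMod 2, (-1 : ℤ) ^ a.val = 1 - 2 * (if a = 1 then (1 : ℤ) else 0) := by decide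
  unfold wht
  simp only [h]
  rw [Finset.sum_sub_distrib, Finset.sum_const, ← Finset.mul_sum, Finset.sum_boole,
    Finset.card_univ, card_fun2]
  simp
lemma wht_linear_zero {n : ℕ} (f : (Fin n → ZMod 2) → ZMod 2) (hf : f = fun _ => 0)
    (ν : Fin n → ZMod 2) (hν : ν ≠ 0) : wht f ν = 0 := by
  subst hf
  obtain ⟨i, hi⟩ := Function.ne_iff.mp hν
  have hi1 : ν i = 1 := zmod2_ne_zero _ hi
  unfold wht
  apply Finset.sum_ninvolution (g := fun x => Function.update x i (x i + 1))
  · intro x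
    have : ((fun _ => (0 : ZMod 2)) (Function.update x i (x i + 1)) +
        dotp ν (Function.update x i (x i + 1))).val
        = ((0 : ZMod 2) + dotp ν x + 1).val := by
      rw [dotp_update, hi1]; ring_nf
    rw [this]
    have h2 : ∀ a : ZMod 2, (-1 : ℤ) ^ a.val + (-1 : ℤ) ^ (a + 1).val = 0 := by decide
    simpa using h2 ((0 : ZMod 2) + dotp ν x)
  · intro x _
    intro hcontra
    have := congrFun hcontra i
    simp at this
  · intro x; exact Finset.mem_univ _
  · intro x
    funext j
    by_cases hj : j = i
    · subst hj
      simp only [Function.update_self]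
      rw [add_assoc, show (1:ZMod 2)+1 = 0 by decide, add_zero]
    · simp [Function.update_of_ne hj]
-- card of filter on subtype equals card of filter on ambient space when predicate fails at 0
lemma card_subtype_filter {n : ℕ} (p : (Fin n → ZMod 2) → Prop) [DecidablePred p]
    (hp0 : ¬ p 0) :
    (Finset.univ.filter fun x : {x : Fin n → ZMod 2 // x ≠ 0} => p x.1).card
      = (Finset.univ.filter p).card := by
  apply Finset.card_bij (fun a _ => a.1)
  · intro a ha
    simp only [Finset.mem_filter, Finset.mem_univ, true_and] at ha ⊢
    exact ha
  · intro a _ b _ h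
    exact Subtype.ext h
  · intro b hb
    simp only [Finset.mem_filter, Finset.mem_univ, true_and] at hb
    have hb0 : b ≠ 0 := fun h => hp0 (h ▸ hb)
    exact ⟨⟨b, hb0⟩, by simp [hb], rfl⟩
lemma whtF_eq_wt {n m : ℕ} (F : (Fin n → ZMod 2) → (Fin m → ZMod 2)) (h0 : F 0 = 0)
    (μ : Fin m → ZMod 2) (ν : Fin n → ZMod 2) :
    whtF F μ ν = 2 ^ n - 2 * (wt (cw F μ ν) : ℤ) := by
  rw [whtF, wht_eq_card]
  congr 2
  rw [wt]
  norm_cast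
  rw [show (Finset.univ.filter fun x : {x : Fin n → ZMod 2 // x ≠ 0} => cw F μ ν x = 1)
      = Finset.univ.filter fun x : {x : Fin n → ZMod 2 // x ≠ 0} =>
          dotp μ (F x.1) + dotp ν x.1 = 1 from rfl]
  exact (card_subtype_filter _ (by rw [h0, dotp_zero_right, dotp_zero_right]; simp)).symm
lemma zmod2_cancel : ∀ a b c d : ZMod 2, a + b = c + d → (a + c) + (b + d) = 0 := by decide
lemma cw_injective {n m : ℕ} (hn : 4 < n) (lam : ℕ) (hlam : lam ≤ n - 4)
    (F : (Fin n → ZMod 2) → (Fin m → ZMod 2)) (h0 : F 0 = 0)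
    (hbd : ∀ μ : Fin m → ZMod 2, μ ≠ 0 → ∀ ν : Fin n → ZMod 2,
      |whtF F μ ν| ≤ 2 ^ ((n + lam) / 2)) :
    Function.Injective (fun p : (Fin m → ZMod 2) × (Fin n → ZMod 2) => cw F p.1 p.2) := by
  have hk : (n + lam) / 2 ≤ n - 2 := by omega
  rintro ⟨μ, ν⟩ ⟨μ', ν'⟩ h
  simp only at h
  have hx : ∀ x : Fin n → ZMod 2,
      dotp (μ + μ') (F x) + dotp (ν + ν') x = 0 := by
    intro x
    by_cases hx0 : x = 0
    · subst hx0; rw [h0, dotp_zero_right, dotp_zero_right, add_zero]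
    · have := congrFun h ⟨x, hx0⟩
      simp only [cw] at this
      rw [dotp_add_left, dotp_add_left]
      exact zmod2_cancel _ _ _ _ this
  have hμ : μ = μ' := by
    by_contra hμ
    have hμ'' : μ + μ' ≠ 0 := by
      intro hc
      apply hμ
      funext i
      have := congrFun hc i
      revert this
      exact (by decide : ∀ a b : ZMod 2, a + b = 0 → a = b) (μ i) (μ' i)
    have hw : whtF F (μ + μ') (ν + ν') = 2 ^ n := by
      unfold whtF wht
      rw [Finset.sum_congr rfl (fun x _ => by rw [hx x])]
      simp [card_fun2]
    have := hbd (μ + μ') hμ'' (ν + ν')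
    rw [hw] at this
    have h1 : (2 : ℤ) ^ ((n + lam) / 2) ≤ 2 ^ (n - 2) := by
      apply pow_le_pow_right₀ (by norm_num) hk
    have h2 : (2 : ℤ) ^ (n - 2) < 2 ^ n := by
      apply pow_lt_pow_right₀ (by norm_num) (by omega)
    rw [abs_of_nonneg (by positivity)] at this
    linarith
  subst hμ
  have hν : ν = ν' := by
    funext i
    have hne : (Pi.single i 1 : Fin n → ZMod 2) ≠ 0 := by
      intro hc
      have := congrFun hc i
      rw [Pi.single_eq_same] at this
      exact one_ne_zero this
    have := congrFun h ⟨Pi.single i 1, hne⟩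
    simp only [cw] at this
    have h2 := add_left_cancel this
    rwa [dotp_single, dotp_single] at h2
  subst hν
  rfl
lemma wt_bounds {n m : ℕ} (hn : 4 < n) (lam : ℕ) (hlam : lam ≤ n - 4)
    (F : (Fin n → ZMod 2) → (Fin m → ZMod 2)) (h0 : F 0 = 0)
    (hbd : ∀ μ : Fin m → ZMod 2, μ ≠ 0 → ∀ ν : Fin n → ZMod 2,
      |whtF F μ ν| ≤ 2 ^ ((n + lam) / 2))
    (μ : Fin m → ZMod 2) (ν : Fin n → ZMod 2) (hnz : cw F μ ν ≠ 0) :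
    2 ^ (n - 1) - 2 ^ ((n + lam) / 2 - 1) ≤ wt (cw F μ ν) ∧
      wt (cw F μ ν) ≤ 2 ^ (n - 1) + 2 ^ ((n + lam) / 2 - 1) := by
  set k := (n + lam) / 2 with hkdef
  have habs : |whtF F μ ν| ≤ 2 ^ k := by
    by_cases hμ : μ = 0
    · subst hμ
      have hν : ν ≠ 0 := by
        intro hc
        subst hc
        apply hnz
        funext x
        simp [cw, dotp_zero_left, dotp_zero_right]
      have : whtF F 0 ν = 0 := by
        apply wht_linear_zero
        · funext x; exact dotp_zero_left _
        · exact hν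
      rw [this, abs_zero]
      positivity
    · exact hbd μ hμ ν
  have hW := whtF_eq_wt F h0 μ ν
  rw [hW] at habs
  rw [abs_le] at habs
  have e1 : (2 : ℤ) ^ n = 2 * 2 ^ (n - 1) := by
    rw [← pow_succ']; congr 1; omega
  have e2 : (2 : ℤ) ^ k = 2 * 2 ^ (k - 1) := by
    rw [← pow_succ']; congr 1; omega
  have hkb : 2 ^ (k - 1) ≤ 2 ^ (n - 1) := Nat.pow_le_pow_right (by norm_num) (by omega)
  constructor
  · suffices h : (2 : ℕ) ^ (n - 1) ≤ wt (cw F μ ν) + 2 ^ (k - 1) by omega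
    have : (2 : ℤ) ^ (n - 1) ≤ (wt (cw F μ ν) : ℤ) + 2 ^ (k - 1) := by linarith [habs.2]
    exact_mod_cast this
  · have : (wt (cw F μ ν) : ℤ) ≤ 2 ^ (n - 1) + 2 ^ (k - 1) := by linarith [habs.1]
    exact_mod_cast this
lemma cw_add {n m : ℕ} (F : (Fin n → ZMod 2) → (Fin m → ZMod 2))
    (μ μ' : Fin m → ZMod 2) (ν ν' : Fin n → ZMod 2) :
    cw F μ ν + cw F μ' ν' = cw F (μ + μ') (ν + ν') := by
  funext x
  simp only [Pi.add_apply, cw, dotp_add_left]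
  ring
lemma wt_split {n : ℕ} (c c' : {x : Fin n → ZMod 2 // x ≠ 0} → ZMod 2)
    (hsub : ∀ x, c' x = 1 → c x = 1) :
    wt c = wt c' + wt (c + c') := by
  have h1 : (Finset.univ.filter fun x => c' x = 1) ⊆ (Finset.univ.filter fun x => c x = 1) := by
    intro x hx
    simp only [Finset.mem_filter, Finset.mem_univ, true_and] at hx ⊢
    exact hsub x hx
  have h2 : (Finset.univ.filter fun x => (c + c') x = 1)
      = (Finset.univ.filter fun x => c x = 1) \ (Finset.univ.filter fun x => c' x = 1) := by
    ext x
    simp only [Finset.mem_filter, Finset.mem_sdiff, Finset.mem_univ, true_and, Pi.add_apply]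
    have := hsub x
    revert this
    exact (by decide : ∀ a b : ZMod 2, (b = 1 → a = 1) → (a + b = 1 ↔ a = 1 ∧ ¬ b = 1))
      (c x) (c' x)
  have h3 := Finset.card_le_card h1
  rw [wt, wt, wt, h2, Finset.card_sdiff_of_subset h1]
  omega

theorem stmt4 (n m : ℕ) (hn : 4 < n) (lam : ℕ) (hlam : lam ≤ n - 4)
    (hpar : lam % 2 = n % 2)
    (F : (Fin n → ZMod 2) → (Fin m → ZMod 2)) (h0 : F 0 = 0)
    (hbd : ∀ μ : Fin m → ZMod 2, μ ≠ 0 → ∀ ν : Fin n → ZMod 2,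
      |whtF F μ ν| ≤ 2 ^ ((n + lam) / 2))
    (hmax : ∃ (μ : Fin m → ZMod 2) (ν : Fin n → ZMod 2), μ ≠ 0 ∧
      |whtF F μ ν| = 2 ^ ((n + lam) / 2)) :
    IsMinimal (codeF F) ∧
    Nat.card {x : Fin n → ZMod 2 // x ≠ 0} = 2 ^ n - 1 ∧
    Nat.card (codeF F) = 2 ^ (n + m) ∧
    (∀ c ∈ codeF F, c ≠ 0 → 2 ^ (n - 1) - 2 ^ ((n + lam) / 2 - 1) ≤ wt c) := by
  set k := (n + lam) / 2 with hkdef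
  -- generic bounds for nonzero codewords
  have key : ∀ μ ν, cw F μ ν ≠ 0 →
      2 ^ (n - 1) - 2 ^ (k - 1) ≤ wt (cw F μ ν) ∧
        wt (cw F μ ν) ≤ 2 ^ (n - 1) + 2 ^ (k - 1) :=
    fun μ ν h => wt_bounds hn lam hlam F h0 hbd μ ν h
  refine ⟨?_, ?_, ?_, ?_⟩
  · -- minimality
    rintro c ⟨⟨μ, ν⟩, rfl⟩ c' ⟨⟨μ', ν'⟩, rfl⟩ hc hc' hss
    simp only at hc hc' hss ⊢
    by_contra hne
    have hsum : cw F μ ν + cw F μ' ν' = cw F (μ + μ') (ν + ν') := cw_add F μ μ' ν ν'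
    have hsumne : cw F (μ + μ') (ν + ν') ≠ 0 := by
      rw [← hsum]
      intro hzero
      apply hne
      funext x
      have := congrFun hzero x
      simp only [Pi.add_apply, Pi.zero_apply] at this
      revert this
      exact (by decide : ∀ a b : ZMod 2, a + b = 0 → b = a) (cw F μ ν x) (cw F μ' ν' x)
    have hsplit := wt_split (cw F μ ν) (cw F μ' ν') (fun x hx => hss hx)
    rw [hsum] at hsplit
    have b1 := (key μ ν hc).2
    have b2 := (key μ' ν' hc').1
    have b3 := (key (μ + μ') (ν + ν') hsumne).1
    have ha : (2 : ℕ) ^ (n - 1) = 4 * 2 ^ (n - 3) := by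
      rw [show n - 1 = (n - 3) + 2 by omega, pow_add]; ring
    have hb : (2 : ℕ) ^ (k - 1) ≤ 2 ^ (n - 3) := by
      apply Nat.pow_le_pow_right (by norm_num)
      omega
    have hb1 : 1 ≤ (2 : ℕ) ^ (k - 1) := Nat.one_le_two_pow
    omega
  · -- length
    rw [Nat.card_eq_fintype_card]
    rw [Fintype.card_subtype_compl (fun x : Fin n → ZMod 2 => x = 0)]
    rw [Fintype.card_subtype_eq, card_fun2]
  · -- dimension
    rw [codeF, Nat.card_range_of_injective (cw_injective hn lam hlam F h0 hbd)]
    rw [Nat.card_eq_fintype_card, Fintype.card_prod, card_fun2, card_fun2,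
      ← pow_add, Nat.add_comm]
  · -- minimum distance
    rintro c ⟨⟨μ, ν⟩, rfl⟩ hc
    exact (key μ ν hc).1
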